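/- There exists a unique K-linear derivation ∂ of the monoid algebra K[S] such that ∂(f_λ) = ρ(λ)·f_{λ+μ} for every λ ∈ S with ρ(λ) > 0, and ∂(f_λ) = 0 for every λ ∈ S with ρ(λ) = 0. (This is the derivation ∂_μ attached to the Demazure root μ of the weight cone of S, defining the standard T-root subgroup on the affine toric variety Spec K[S].) -/

import Mathlib

open AddMonoidAlgebra

/-- There exists a unique `K`-linear derivation `∂` of the monoid algebra `K[S]` such that
`∂ f_λ = ρ(λ) • f_{λ+μ}` when `ρ(λ) > 0` and `∂ f_λ = 0` when `ρ(λ) = 0`. -/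
theorem stmt0 {K M : Type*} [Field K] [CharZero K] [AddCommGroup M]
    [Module.Free ℤ M] [Module.Finite ℤ M]
    (S : AddSubmonoid M) (ρ : M →+ ℤ) (μ : M)
    (h1 : ∀ l ∈ S, 0 ≤ ρ l) (h2 : ρ μ = -1)
    (h3 : ∀ l ∈ S, 0 < ρ l → l + μ ∈ S) :
    ∃! D : Derivation K (AddMonoidAlgebra K S) (AddMonoidAlgebra K S),
      ∀ l : S,
        (∀ h : 0 < ρ (l : M),
          D (of' K S l) = ((ρ (l : M) : K)) • of' K S (⟨(l : M) + μ, h3 l l.2 h⟩ : S))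
        ∧ (ρ (l : M) = 0 → D (of' K S l) = 0) := by
  classical
  set d : S → AddMonoidAlgebra K S := fun l =>
    if h : 0 < ρ (l : M) then ((ρ (l : M) : K)) • of' K S (⟨(l : M) + μ, h3 l l.2 h⟩ : S)
    else 0 with hd
  have hof : ∀ a b : S, of' K S a * of' K S b = of' K S (a + b) := by
    intro a b
    rw [of'_apply, of'_apply, of'_apply, AddMonoidAlgebra.single_mul_single, one_mul]
  have key : ∀ a b : S, d (a + b) = of' K S a * d b + of' K S b * d a := by
    intro a b
    have ha := h1 a a.2
    have hb := h1 b b.2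
    have hab : ρ (((a + b : S)) : M) = ρ (a : M) + ρ (b : M) := by
      simp [map_add]
    rcases ha.eq_or_lt with ha0 | hap <;> rcases hb.eq_or_lt with hb0 | hbp
    · simp only [hd]
      rw [dif_neg (show ¬ 0 < ρ (((a + b : S)) : M) by omega),
        dif_neg (by omega : ¬ (0 < ρ (a : M))),
        dif_neg (by omega : ¬ (0 < ρ (b : M))), mul_zero, mul_zero, add_zero]
    · have hs : 0 < ρ (((a + b : S)) : M) := by omega
      have hcoe : (⟨((a + b : S) : M) + μ, h3 _ (a + b).2 hs⟩ : S)
          = a + (⟨(b : M) + μ, h3 b b.2 hbp⟩ : S) := by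
        apply Subtype.ext
        push_cast
        abel
      simp only [hd]
      rw [dif_pos hs, dif_pos hbp, dif_neg (by omega : ¬ (0 < ρ (a : M))),
        mul_zero, add_zero, hcoe,
        show ρ (((a + b : S)) : M) = ρ (b : M) by omega,
        mul_smul_comm, hof]
    · have hs : 0 < ρ (((a + b : S)) : M) := by omega
      have hcoe : (⟨((a + b : S) : M) + μ, h3 _ (a + b).2 hs⟩ : S)
          = b + (⟨(a : M) + μ, h3 a a.2 hap⟩ : S) := by
        apply Subtype.ext
        push_cast
        abel
      simp only [hd]
      rw [dif_pos hs, dif_pos hap, dif_neg (by omega : ¬ (0 < ρ (b : M))),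
        mul_zero, zero_add, hcoe,
        show ρ (((a + b : S)) : M) = ρ (a : M) by omega,
        mul_smul_comm, hof]
    · have hs : 0 < ρ (((a + b : S)) : M) := by omega
      have hcoe1 : (a + (⟨(b : M) + μ, h3 b b.2 hbp⟩ : S))
          = (⟨((a + b : S) : M) + μ, h3 _ (a + b).2 hs⟩ : S) := by
        apply Subtype.ext; push_cast; abel
      have hcoe2 : (b + (⟨(a : M) + μ, h3 a a.2 hap⟩ : S))
          = (⟨((a + b : S) : M) + μ, h3 _ (a + b).2 hs⟩ : S) := by
        apply Subtype.ext; push_cast; abel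
      simp only [hd]
      rw [dif_pos hs, dif_pos hap, dif_pos hbp, mul_smul_comm, mul_smul_comm,
        hof, hof, hcoe1, hcoe2, ← add_smul]
      congr 1
      rw [hab]
      push_cast
      ring
  have hd0 : d 0 = 0 := by
    simp only [hd]
    rw [dif_neg]
    simp
  set L : AddMonoidAlgebra K S →ₗ[K] AddMonoidAlgebra K S :=
    Finsupp.lsum K (fun l => (LinearMap.id : K →ₗ[K] K).smulRight (d l)) ∘ₗ
      (AddMonoidAlgebra.coeffLinearEquiv K).toLinearMap with hL
  have hLsingle : ∀ (l : S) (c : K), L (AddMonoidAlgebra.single l c) = c • d l := by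
    intro l c
    rw [hL]
    erw [LinearMap.comp_apply, Finsupp.lsum_single]
    rfl
  have hLof : ∀ l : S, L (of' K S l) = d l := by
    intro l
    rw [of'_apply, hLsingle, one_smul]
  have hsingle_eq : ∀ (l : S) (c : K),
      (AddMonoidAlgebra.single l c : AddMonoidAlgebra K S) = c • of' K S l := by
    intro l c
    rw [of'_apply, AddMonoidAlgebra.smul_single, smul_eq_mul, mul_one]
  set D : Derivation K (AddMonoidAlgebra K S) (AddMonoidAlgebra K S) :=
  { toLinearMap := L
    map_one_eq_zero' := by
      have h1' : (1 : AddMonoidAlgebra K S) = AddMonoidAlgebra.single (0 : S) (1 : K) := rfl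
      show L 1 = 0
      rw [h1', hLsingle, hd0, smul_zero]
    leibniz' := by
      intro x y
      show L (x * y) = x • L y + y • L x
      simp only [smul_eq_mul]
      induction x using AddMonoidAlgebra.induction_linear with
      | zero => rw [zero_mul, map_zero, zero_mul, mul_zero, add_zero]
      | add f g hf hg =>
        rw [add_mul, map_add, hf, hg, map_add, add_mul]
        ring
      | single a ca =>
        induction y using AddMonoidAlgebra.induction_linear with
        | zero => rw [mul_zero, map_zero, mul_zero, zero_mul, add_zero]
        | add f g hf hg =>
          rw [mul_add, map_add, hf, hg, map_add, mul_add]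
          ring
        | single b cb =>
          rw [hsingle_eq, hsingle_eq, smul_mul_smul_comm, hof, map_smul,
            hLof, key a b, map_smul, map_smul, hLof, hLof]
          simp only [smul_add, smul_mul_assoc, mul_smul_comm, smul_smul]
          rw [mul_comm cb ca] } with hD
  have hDval : ∀ l : S, D (of' K S l) = d l := hLof
  refine ⟨D, ?_, ?_⟩
  · intro l
    constructor
    · intro h
      rw [hDval]
      simp only [hd]
      rw [dif_pos h]
    · intro h
      rw [hDval]
      simp only [hd]
      rw [dif_neg (by omega)]
  · intro D' hD'
    apply Derivation.ext
    intro x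
    induction x using AddMonoidAlgebra.induction_linear with
    | zero => rw [map_zero, map_zero]
    | add f g hf hg => rw [map_add, map_add, hf, hg]
    | single l c =>
      rw [hsingle_eq, Derivation.map_smul, Derivation.map_smul]
      congr 1
      rcases (h1 l l.2).eq_or_lt with h0 | hp
      · rw [(hD' l).2 h0.symm, hDval]
        simp only [hd]
        rw [dif_neg (by omega)]
      · rw [(hD' l).1 hp, hDval]
        simp only [hd]
        rw [dif_pos hp]
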